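/- The mutual information I(f;y) for discrete y is bounded above by U_1 = Σ_a Σ_{b≠a} p(y_a) p(y_b) D_kl[p(f|y_a) ‖ p(f|y_b)], i.e., the average pairwise KL divergence between class-conditional distributions. -/
import Mathlib


open Finset

lemma jensen_log_aux {Y : Type*} [Fintype Y] (p : Y → ℝ) (hp : ∀ a, 0 < p a)
    (hs : ∑ a, p a = 1) (x : Y → ℝ) (hx : ∀ a, 0 < x a) :
    ∑ a, p a * Real.log (x a) ≤ Real.log (∑ a, p a * x a) := by
  have := strictConcaveOn_log_Ioi.concaveOn.le_map_sum
    (t := Finset.univ) (w := p) (p := x)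
    (fun i _ => (hp i).le) hs (fun i _ => Set.mem_Ioi.2 (hx i))
  simpa [smul_eq_mul] using this

/-- The mutual information `I(f;y)` for discrete `y` is bounded above by
`U₁ = ∑_a ∑_{b ≠ a} p(y_a) p(y_b) D_kl[p(f|y_a) ‖ p(f|y_b)]`. -/
theorem mutual_information_le_pairwise_kl
    {F Y : Type*} [Fintype F] [Fintype Y] [DecidableEq Y]
    (py : Y → ℝ) (hpy : ∀ a, 0 < py a) (hpysum : ∑ a, py a = 1)
    (pf : Y → F → ℝ) (hpf : ∀ a f, 0 < pf a f) (hpfsum : ∀ a, ∑ f, pf a f = 1) :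
    ∑ a, ∑ f, (py a * pf a f) *
        Real.log ((py a * pf a f) / ((∑ b, py b * pf b f) * py a)) ≤
      ∑ a, ∑ b ∈ Finset.univ.erase a,
        py a * py b * ∑ f, pf a f * Real.log (pf a f / pf b f) := by
  set mix : F → ℝ := fun f => ∑ b, py b * pf b f with hmix
  have hne : Nonempty Y := by
    by_contra h
    rw [not_nonempty_iff] at h
    simp [Finset.univ_eq_empty] at hpysum
  have hmixpos : ∀ f, 0 < mix f := fun f =>
    Finset.sum_pos (fun b _ => mul_pos (hpy b) (hpf b f)) univ_nonempty
  -- simplify the argument of log on the LHS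
  have hsimp : ∀ a f, (py a * pf a f) / (mix f * py a) = pf a f / mix f := by
    intro a f
    rw [mul_comm (mix f) (py a), mul_div_mul_left _ _ (hpy a).ne']
  -- key pointwise Jensen bound
  have key : ∀ a f, Real.log (pf a f / mix f) ≤
      ∑ b, py b * Real.log (pf a f / pf b f) := by
    intro a f
    have hj := jensen_log_aux py hpy hpysum (fun b => pf b f) (fun b => hpf b f)
    have h1 : Real.log (pf a f / mix f) = Real.log (pf a f) - Real.log (mix f) :=
      Real.log_div (hpf a f).ne' (hmixpos f).ne'
    have h2 : ∑ b, py b * Real.log (pf a f / pf b f) =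
        ∑ b, py b * Real.log (pf a f) - ∑ b, py b * Real.log (pf b f) := by
      rw [← Finset.sum_sub_distrib]
      refine Finset.sum_congr rfl fun b _ => ?_
      rw [Real.log_div (hpf a f).ne' (hpf b f).ne', mul_sub]
    have h3 : ∑ b, py b * Real.log (pf a f) = Real.log (pf a f) := by
      rw [← Finset.sum_mul, hpysum, one_mul]
    rw [h1, h2, h3]
    linarith [hj]
  calc ∑ a, ∑ f, (py a * pf a f) *
        Real.log ((py a * pf a f) / (mix f * py a))
      ≤ ∑ a, ∑ f, (py a * pf a f) * ∑ b, py b * Real.log (pf a f / pf b f) := by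
        refine Finset.sum_le_sum fun a _ => Finset.sum_le_sum fun f _ => ?_
        rw [hsimp a f]
        exact mul_le_mul_of_nonneg_left (key a f)
          (mul_pos (hpy a) (hpf a f)).le
    _ = ∑ a, ∑ b, py a * py b * ∑ f, pf a f * Real.log (pf a f / pf b f) := by
        refine Finset.sum_congr rfl fun a _ => ?_
        simp only [Finset.mul_sum]
        rw [Finset.sum_comm]
        exact Finset.sum_congr rfl fun b _ => Finset.sum_congr rfl fun f _ => by ring
    _ = ∑ a, ∑ b ∈ Finset.univ.erase a,
        py a * py b * ∑ f, pf a f * Real.log (pf a f / pf b f) := by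
        refine Finset.sum_congr rfl fun a _ => ?_
        have hdiag : ∑ f, pf a f * Real.log (pf a f / pf a f) = 0 :=
          Finset.sum_eq_zero fun f _ => by
            rw [div_self (hpf a f).ne', Real.log_one, mul_zero]
        rw [← Finset.sum_erase_add _ _ (Finset.mem_univ a), hdiag, mul_zero, add_zero]
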